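/- Assume W has reciprocal weights. For all t↑↓, t↓↑, u↑, u↓ ∈ ℂ, setting s↑ = u↑·(t↑↓ − 1) and s↓ = u↓·(t↓↑ − 1), one has (1 − s↑·s↓)^n · det(I_{2m} − M(1,1,t↑↓,t↓↑,u↑,u↓)) = (1 − s↑·s↓)^m · det((1 − s↑·s↓)·I_n − u↑·W − u↓·W* − s↑·u↓·D^out − s↓·u↑·D^in). -/

import Mathlib

open Matrix

noncomputable section
open scoped Classical

namespace ZetaStmt1

variable {V : Type*} [Fintype V] [DecidableEq V]

/-- The edge set of the weighted digraph: pairs of vertices with nonzero weight. -/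
abbrev Edge (W : Matrix V V ℂ) : Type _ := {p : V × V // W p.1 p.2 ≠ 0}

/-- The bidirectional edge set `E⇅ = E ⊕ E`. -/
abbrev BiEdge (W : Matrix V V ℂ) : Type _ := Edge W ⊕ Edge W

variable (W : Matrix V V ℂ)

/-- Tail of a bidirectional edge. -/
def tail : BiEdge W → V := Sum.elim (fun e => e.1.1) (fun e => e.1.2)

/-- Head of a bidirectional edge. -/
def head : BiEdge W → V := Sum.elim (fun e => e.1.2) (fun e => e.1.1)

/-- Weight of a bidirectional edge (the added reverse copies have reciprocal weight). -/
def wt : BiEdge W → ℂ := Sum.elim (fun e => W e.1.1 e.1.2) (fun e => (W e.1.1 e.1.2)⁻¹)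

/-- Direction of a bidirectional edge: `true` = ↑ (original), `false` = ↓ (added). -/
def dir : BiEdge W → Bool := Sum.elim (fun _ => true) (fun _ => false)

/-- The weighted bump matrix `B_{dd'}`. -/
def B (d d' : Bool) : Matrix (BiEdge W) (BiEdge W) ℂ :=
  Matrix.of fun e f =>
    if dir W e = d ∧ dir W f = d' ∧ tail W f = head W e ∧ head W f = tail W e
    then wt W e else 0

/-- The weighted adjacency matrix `C_d` of the line digraph. -/
def C (d : Bool) : Matrix (BiEdge W) (BiEdge W) ℂ :=
  Matrix.of fun e f => if dir W e = d ∧ head W e = tail W f then wt W e else 0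

/-- The matrix `M(t,u)`; the argument order is `(t↑↑, t↓↓, t↑↓, t↓↑, u↑, u↓)`. -/
def M (t₁ t₂ t₃ t₄ u₁ u₂ : ℂ) : Matrix (BiEdge W) (BiEdge W) ℂ :=
  u₁ • (C W true + (t₁ - 1) • B W true true + (t₃ - 1) • B W true false) +
  u₂ • (C W false + (t₂ - 1) • B W false false + (t₄ - 1) • B W false true)

/-- The 0/1 adjacency matrix of the support of `W`. -/
def Adj : Matrix V V ℂ := Matrix.of fun u v => if W u v ≠ 0 then 1 else 0

/-- Diagonal matrix of out-degrees (row sums of `Adj`). -/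
def Dout : Matrix V V ℂ := Matrix.diagonal fun u => ∑ v, Adj W u v

/-- Diagonal matrix of in-degrees (column sums of `Adj`). -/
def Din : Matrix V V ℂ := Matrix.diagonal fun v => ∑ u, Adj W u v

/-- `(W*)_{uv} = (W_{vu})⁻¹` if `W_{vu} ≠ 0` and `0` otherwise (note `0⁻¹ = 0` in `ℂ`). -/
def Wstar : Matrix V V ℂ := Matrix.of fun u v => if W v u ≠ 0 then (W v u)⁻¹ else 0

/-- `W` has reciprocal weights. -/
def Reciprocal : Prop := ∀ u v, W u v ≠ 0 → W v u ≠ 0 → W u v * W v u = 1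



variable {V : Type*} [Fintype V] [DecidableEq V] (W : Matrix V V ℂ)

/-- auxiliary head-incidence matrix -/
def Kp (u₁ u₂ : ℂ) : Matrix (BiEdge W) V ℂ :=
  Matrix.of fun e v => if head W e = v then (if dir W e then u₁ else u₂) * wt W e else 0

/-- auxiliary tail-incidence matrix -/
def Lm : Matrix V (BiEdge W) ℂ :=
  Matrix.of fun v f => if tail W f = v then 1 else 0

/-- auxiliary bump part -/
def Jm (s₁ s₂ : ℂ) : Matrix (BiEdge W) (BiEdge W) ℂ :=
  s₁ • B W true false + s₂ • B W false true

lemma Jm_inl (s₁ s₂ : ℂ) (a : Edge W) (f : BiEdge W) :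
    Jm W s₁ s₂ (Sum.inl a) f = if f = Sum.inr a then s₁ * W a.1.1 a.1.2 else 0 := by
  rcases a with ⟨⟨a1, a2⟩, ha⟩
  cases f with
  | inl b =>
    rcases b with ⟨⟨b1, b2⟩, hb⟩
    simp [Jm, B, dir, head, tail, wt]
  | inr b =>
    rcases b with ⟨⟨b1, b2⟩, hb⟩
    simp only [Jm, B, dir, head, tail, wt, Matrix.add_apply, Matrix.smul_apply, Matrix.of_apply,
      Sum.elim_inl, Sum.elim_inr, smul_eq_mul]
    by_cases h : b1 = a1 ∧ b2 = a2
    · obtain ⟨rfl, rfl⟩ := h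
      simp
    · have : ((Sum.inr ⟨(b1, b2), hb⟩ : BiEdge W) = Sum.inr ⟨(a1, a2), ha⟩) → False := by
        simp [Subtype.ext_iff, Prod.ext_iff]; tauto
      rw [if_neg this]
      have h2 : ¬ (b2 = a2 ∧ b1 = a1) := by tauto
      simp only [true_and]
      simp only [h2, Bool.true_eq_false, Bool.false_eq_true, false_and, and_false, if_false]
      ring

lemma Jm_inr (s₁ s₂ : ℂ) (a : Edge W) (f : BiEdge W) :
    Jm W s₁ s₂ (Sum.inr a) f = if f = Sum.inl a then s₂ * (W a.1.1 a.1.2)⁻¹ else 0 := by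
  rcases a with ⟨⟨a1, a2⟩, ha⟩
  cases f with
  | inr b =>
    rcases b with ⟨⟨b1, b2⟩, hb⟩
    simp [Jm, B, dir, head, tail, wt]
  | inl b =>
    rcases b with ⟨⟨b1, b2⟩, hb⟩
    simp only [Jm, B, dir, head, tail, wt, Matrix.add_apply, Matrix.smul_apply, Matrix.of_apply,
      Sum.elim_inl, Sum.elim_inr, smul_eq_mul]
    by_cases h : b1 = a1 ∧ b2 = a2
    · obtain ⟨rfl, rfl⟩ := h
      simp
    · have : ((Sum.inl ⟨(b1, b2), hb⟩ : BiEdge W) = Sum.inl ⟨(a1, a2), ha⟩) → False := by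
        simp [Subtype.ext_iff, Prod.ext_iff]; tauto
      rw [if_neg this]
      have h2 : ¬ (b1 = a1 ∧ b2 = a2) := h
      simp only [true_and]
      simp only [h2, Bool.true_eq_false, Bool.false_eq_true, false_and, and_false, if_false]
      ring

lemma M_eq (t₃ t₄ u₁ u₂ : ℂ) :
    M W 1 1 t₃ t₄ u₁ u₂ = Kp W u₁ u₂ * Lm W + Jm W (u₁ * (t₃ - 1)) (u₂ * (t₄ - 1)) := by
  ext e f
  have hKL : (Kp W u₁ u₂ * Lm W) e f
      = if head W e = tail W f then (if dir W e then u₁ else u₂) * wt W e else 0 := by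
    rw [Matrix.mul_apply]
    rw [Finset.sum_eq_single (tail W f)]
    · simp [Kp, Lm]
    · intro v _ hv
      simp [Kp, Lm, Ne.symm hv]
    · simp
  rw [Matrix.add_apply, hKL]
  cases e with
  | inl a =>
    rw [Jm_inl]
    cases f with
    | inl b =>
      simp only [M, C, B, dir, head, tail, wt, Matrix.add_apply, Matrix.smul_apply,
        Matrix.of_apply, Sum.elim_inl, Sum.elim_inr, smul_eq_mul, sub_self, zero_mul, zero_smul,
        Matrix.zero_apply, true_and, and_true, if_true, reduceCtorEq, if_false, and_false,
        false_and, Bool.true_eq_false, Bool.false_eq_true, add_zero, zero_add, mul_zero]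
      split_ifs <;> simp_all <;> ring
    | inr b =>
      simp only [M, C, B, dir, head, tail, wt, Matrix.add_apply, Matrix.smul_apply,
        Matrix.of_apply, Sum.elim_inl, Sum.elim_inr, smul_eq_mul, sub_self, zero_mul, zero_smul,
        Matrix.zero_apply, true_and, and_true, if_true, reduceCtorEq, if_false, and_false,
        false_and, Bool.true_eq_false, Bool.false_eq_true, add_zero, zero_add, mul_zero,
        Sum.inr.injEq]
      rcases eq_or_ne b a with rfl | hba
      · simp only [and_self, if_pos rfl, if_true]
        ring
      · have hb1 : ¬((b : V × V).2 = (a : V × V).2 ∧ (b : V × V).1 = (a : V × V).1) :=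
          fun h => hba (Subtype.ext (Prod.ext h.2 h.1))
        rw [if_neg hb1, if_neg hba]
        split_ifs <;> ring
  | inr a =>
    rw [Jm_inr]
    cases f with
    | inr b =>
      simp only [M, C, B, dir, head, tail, wt, Matrix.add_apply, Matrix.smul_apply,
        Matrix.of_apply, Sum.elim_inl, Sum.elim_inr, smul_eq_mul, sub_self, zero_mul, zero_smul,
        Matrix.zero_apply, true_and, and_true, if_true, reduceCtorEq, if_false, and_false,
        false_and, Bool.true_eq_false, Bool.false_eq_true, add_zero, zero_add, mul_zero]
      split_ifs <;> simp_all <;> ring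
    | inl b =>
      simp only [M, C, B, dir, head, tail, wt, Matrix.add_apply, Matrix.smul_apply,
        Matrix.of_apply, Sum.elim_inl, Sum.elim_inr, smul_eq_mul, sub_self, zero_mul, zero_smul,
        Matrix.zero_apply, true_and, and_true, if_true, reduceCtorEq, if_false, and_false,
        false_and, Bool.true_eq_false, Bool.false_eq_true, add_zero, zero_add, mul_zero,
        Sum.inl.injEq]
      rcases eq_or_ne b a with rfl | hba
      · simp only [and_self, if_pos rfl, if_true]
        ring
      · have hb1 : ¬((b : V × V).1 = (a : V × V).1 ∧ (b : V × V).2 = (a : V × V).2) :=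
          fun h => hba (Subtype.ext (Prod.ext h.1 h.2))
        rw [if_neg hb1, if_neg hba]
        split_ifs <;> ring


lemma Jm_mul_Jm (s₁ s₂ : ℂ) : Jm W s₁ s₂ * Jm W s₁ s₂ = (s₁ * s₂) • 1 := by
  ext e f
  rw [Matrix.mul_apply]
  cases e with
  | inl a =>
    rw [Finset.sum_eq_single (Sum.inr a : BiEdge W)]
    · rw [Jm_inl, if_pos rfl, Jm_inr]
      rw [Matrix.smul_apply, Matrix.one_apply, smul_eq_mul]
      by_cases hf : f = Sum.inl a
      · subst hf
        rw [if_pos rfl, if_pos rfl, mul_one]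
        have ha := a.2
        field_simp
      · rw [if_neg hf, if_neg (fun h => hf h.symm), mul_zero, mul_zero]
    · intro g _ hg
      rw [Jm_inl, if_neg hg, zero_mul]
    · simp
  | inr a =>
    rw [Finset.sum_eq_single (Sum.inl a : BiEdge W)]
    · rw [Jm_inr, if_pos rfl, Jm_inl]
      rw [Matrix.smul_apply, Matrix.one_apply, smul_eq_mul]
      by_cases hf : f = Sum.inr a
      · subst hf
        rw [if_pos rfl, if_pos rfl, mul_one]
        have ha := a.2
        field_simp
      · rw [if_neg hf, if_neg (fun h => hf h.symm), mul_zero, mul_zero]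
    · intro g _ hg
      rw [Jm_inr, if_neg hg, zero_mul]
    · simp

lemma one_add_Jm_eq (s₁ s₂ : ℂ) :
    (1 : Matrix (BiEdge W) (BiEdge W) ℂ) + Jm W s₁ s₂ =
      Matrix.fromBlocks 1
        (s₁ • Matrix.diagonal (fun a : Edge W => W a.1.1 a.1.2))
        (s₂ • Matrix.diagonal (fun a : Edge W => (W a.1.1 a.1.2)⁻¹)) 1 := by
  ext e f
  cases e with
  | inl a =>
    cases f with
    | inl b =>
      rw [Matrix.add_apply, Jm_inl, if_neg (by simp), add_zero]
      simp [Matrix.one_apply, Matrix.fromBlocks, Sum.inl.injEq]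
    | inr b =>
      rw [Matrix.add_apply, Jm_inl, Matrix.one_apply, if_neg (by simp)]
      simp only [Matrix.fromBlocks, Matrix.of_apply, Sum.elim_inl, Sum.elim_inr,
        Matrix.smul_apply, Matrix.diagonal_apply, smul_eq_mul, zero_add]
      by_cases h : b = a
      · subst h; rw [if_pos rfl, if_pos rfl]
      · rw [if_neg (by simpa using h), if_neg (fun hh => h hh.symm), mul_zero]
  | inr a =>
    cases f with
    | inr b =>
      rw [Matrix.add_apply, Jm_inr, if_neg (by simp), add_zero]
      simp [Matrix.one_apply, Matrix.fromBlocks, Sum.inr.injEq]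
    | inl b =>
      rw [Matrix.add_apply, Jm_inr, Matrix.one_apply, if_neg (by simp)]
      simp only [Matrix.fromBlocks, Matrix.of_apply, Sum.elim_inl, Sum.elim_inr,
        Matrix.smul_apply, Matrix.diagonal_apply, smul_eq_mul, zero_add]
      by_cases h : b = a
      · subst h; rw [if_pos rfl, if_pos rfl]
      · rw [if_neg (by simpa using h), if_neg (fun hh => h hh.symm), mul_zero]

lemma det_one_add_Jm (s₁ s₂ : ℂ) :
    ((1 : Matrix (BiEdge W) (BiEdge W) ℂ) + Jm W s₁ s₂).det
      = (1 - s₁ * s₂) ^ Fintype.card (Edge W) := by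
  rw [one_add_Jm_eq, Matrix.det_fromBlocks_one₁₁]
  have hDD : (Matrix.diagonal (fun a : Edge W => (W a.1.1 a.1.2)⁻¹)) *
      (Matrix.diagonal (fun a : Edge W => W a.1.1 a.1.2)) = 1 := by
    rw [Matrix.diagonal_mul_diagonal]
    have : (fun a : Edge W => (W a.1.1 a.1.2)⁻¹ * W a.1.1 a.1.2) = fun _ => (1:ℂ) :=
      funext fun a => inv_mul_cancel₀ a.2
    rw [this, Matrix.diagonal_one]
  rw [Matrix.smul_mul, Matrix.mul_smul, smul_smul, hDD]
  have : (1 : Matrix (Edge W) (Edge W) ℂ) - (s₂ * s₁) • 1 = (1 - s₁ * s₂) • 1 := by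
    rw [sub_smul, one_smul, mul_comm s₂ s₁]
  rw [this, Matrix.det_smul, Matrix.det_one, mul_one]

lemma edge_sum (g : V × V → ℂ) :
    ∑ a : Edge W, g a.1 = ∑ x : V, ∑ y : V, if W x y ≠ 0 then g (x, y) else 0 := by
  rw [← Finset.sum_subtype (Finset.univ.filter fun p : V × V => W p.1 p.2 ≠ 0)
      (by simp) g]
  rw [Finset.sum_filter, Fintype.sum_prod_type]

lemma LK_eq (u₁ u₂ : ℂ) : Lm W * Kp W u₁ u₂ = u₁ • W + u₂ • Wstar W := by
  ext u v
  rw [Matrix.mul_apply, Fintype.sum_sum_type]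
  have h1 : ∑ a : Edge W, Lm W u (Sum.inl a) * Kp W u₁ u₂ (Sum.inl a) v = u₁ * W u v := by
    have := edge_sum W (fun p => (if p.1 = u then (1:ℂ) else 0) *
      (if p.2 = v then u₁ * W p.1 p.2 else 0))
    simp only [Lm, Kp, Matrix.of_apply, head, tail, dir, wt, Sum.elim_inl, if_true]
    refine this.trans ?_
    rw [Finset.sum_eq_single u]
    · rw [Finset.sum_eq_single v]
      · by_cases h : W u v = 0 <;> simp [h]
      · intro y _ hy; simp [hy]
      · simp
    · intro x _ hx
      apply Finset.sum_eq_zero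
      intro y _
      simp [hx]
    · simp
  have h2 : ∑ a : Edge W, Lm W u (Sum.inr a) * Kp W u₁ u₂ (Sum.inr a) v
      = u₂ * Wstar W u v := by
    have := edge_sum W (fun p => (if p.2 = u then (1:ℂ) else 0) *
      (if p.1 = v then u₂ * (W p.1 p.2)⁻¹ else 0))
    simp only [Lm, Kp, Matrix.of_apply, head, tail, dir, wt, Sum.elim_inr,
      Bool.false_eq_true, if_false, if_true]
    refine this.trans ?_
    rw [Finset.sum_eq_single v]
    · rw [Finset.sum_eq_single u]
      · by_cases h : W v u = 0 <;> simp [Wstar, h]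
      · intro y _ hy; simp [hy]
      · simp
    · intro x _ hx
      apply Finset.sum_eq_zero
      intro y _
      simp [hx]
    · simp
  rw [h1, h2]
  simp [Wstar]

lemma JK_inl (s₁ s₂ u₁ u₂ : ℂ) (a : Edge W) (v : V) :
    (Jm W s₁ s₂ * Kp W u₁ u₂) (Sum.inl a) v
      = if (a : V × V).1 = v then s₁ * u₂ else 0 := by
  rw [Matrix.mul_apply, Finset.sum_eq_single (Sum.inr a : BiEdge W)]
  · rw [Jm_inl, if_pos rfl]
    simp only [Kp, Matrix.of_apply, head, dir, wt, Sum.elim_inr,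
      Bool.false_eq_true, if_false, if_true]
    by_cases h : (a : V × V).1 = v
    · rw [if_pos h, if_pos h]
      have ha := a.2
      field_simp
    · rw [if_neg h, if_neg h, mul_zero]
  · intro g _ hg
    rw [Jm_inl, if_neg hg, zero_mul]
  · simp

lemma JK_inr (s₁ s₂ u₁ u₂ : ℂ) (a : Edge W) (v : V) :
    (Jm W s₁ s₂ * Kp W u₁ u₂) (Sum.inr a) v
      = if (a : V × V).2 = v then s₂ * u₁ else 0 := by
  rw [Matrix.mul_apply, Finset.sum_eq_single (Sum.inl a : BiEdge W)]
  · rw [Jm_inr, if_pos rfl]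
    simp only [Kp, Matrix.of_apply, head, dir, wt, Sum.elim_inl,
      Bool.false_eq_true, if_false, if_true]
    by_cases h : (a : V × V).2 = v
    · rw [if_pos h, if_pos h]
      have ha := a.2
      field_simp
    · rw [if_neg h, if_neg h, mul_zero]
  · intro g _ hg
    rw [Jm_inr, if_neg hg, zero_mul]
  · simp

lemma out_deg_sum (u : V) :
    ∑ a : Edge W, (if (a : V × V).1 = u then (1:ℂ) else 0) = ∑ y, Adj W u y := by
  rw [edge_sum W (fun p => if p.1 = u then (1:ℂ) else 0)]
  rw [Finset.sum_eq_single u]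
  · apply Finset.sum_congr rfl
    intro y _
    by_cases h : W u y = 0 <;> simp [Adj, h]
  · intro x _ hx
    apply Finset.sum_eq_zero
    intro y _
    simp [hx]
  · simp

lemma in_deg_sum (u : V) :
    ∑ a : Edge W, (if (a : V × V).2 = u then (1:ℂ) else 0) = ∑ x, Adj W x u := by
  rw [edge_sum W (fun p => if p.2 = u then (1:ℂ) else 0)]
  apply Finset.sum_congr rfl
  intro x _
  rw [Finset.sum_eq_single u]
  · by_cases h : W x u = 0 <;> simp [Adj, h]
  · intro y _ hy; simp [hy]
  · simp

lemma LJK_eq (s₁ s₂ u₁ u₂ : ℂ) :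
    Lm W * (Jm W s₁ s₂ * Kp W u₁ u₂) = (s₁ * u₂) • Dout W + (s₂ * u₁) • Din W := by
  ext u v
  rw [Matrix.mul_apply, Fintype.sum_sum_type]
  simp only [JK_inl, JK_inr, Lm, Matrix.of_apply, tail, Sum.elim_inl, Sum.elim_inr]
  by_cases huv : u = v
  · subst huv
    have e1 : ∑ a : Edge W, (if (a : V × V).1 = u then (1:ℂ) else 0) *
        (if (a : V × V).1 = u then s₁ * u₂ else 0)
        = (s₁ * u₂) * ∑ y, Adj W u y := by
      rw [← out_deg_sum, Finset.mul_sum]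
      apply Finset.sum_congr rfl
      intro a _
      by_cases h : (a : V × V).1 = u <;> simp [h]
    have e2 : ∑ a : Edge W, (if (a : V × V).2 = u then (1:ℂ) else 0) *
        (if (a : V × V).2 = u then s₂ * u₁ else 0)
        = (s₂ * u₁) * ∑ x, Adj W x u := by
      rw [← in_deg_sum, Finset.mul_sum]
      apply Finset.sum_congr rfl
      intro a _
      by_cases h : (a : V × V).2 = u <;> simp [h]
    refine (congrArg₂ (· + ·) e1 e2).trans ?_
    simp [Dout, Din, Matrix.diagonal_apply_eq]
  · have e1 : ∑ a : Edge W, (if (a : V × V).1 = u then (1:ℂ) else 0) *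
        (if (a : V × V).1 = v then s₁ * u₂ else 0) = 0 := by
      apply Finset.sum_eq_zero
      intro a _
      by_cases h : (a : V × V).1 = u
      · rw [if_pos h, if_neg (h ▸ huv), mul_zero]
      · rw [if_neg h, zero_mul]
    have e2 : ∑ a : Edge W, (if (a : V × V).2 = u then (1:ℂ) else 0) *
        (if (a : V × V).2 = v then s₂ * u₁ else 0) = 0 := by
      apply Finset.sum_eq_zero
      intro a _
      by_cases h : (a : V × V).2 = u
      · rw [if_pos h, if_neg (h ▸ huv), mul_zero]
      · rw [if_neg h, zero_mul]
    refine (congrArg₂ (· + ·) e1 e2).trans ?_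
    simp [Dout, Din, Matrix.diagonal_apply_ne _ huv]


end ZetaStmt1

open ZetaStmt1

/-- The polynomial expression for the reversing zeta function. -/
theorem stmt_1 {V : Type*} [Fintype V] [DecidableEq V] (W : Matrix V V ℂ)
    (hrec : Reciprocal W) (t₃ t₄ u₁ u₂ : ℂ) :
    (1 - (u₁ * (t₃ - 1)) * (u₂ * (t₄ - 1))) ^ Fintype.card V *
        ((1 : Matrix (BiEdge W) (BiEdge W) ℂ) - M W 1 1 t₃ t₄ u₁ u₂).det =
      (1 - (u₁ * (t₃ - 1)) * (u₂ * (t₄ - 1))) ^ Fintype.card (Edge W) *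
        ((1 - (u₁ * (t₃ - 1)) * (u₂ * (t₄ - 1))) • (1 : Matrix V V ℂ)
          - u₁ • W - u₂ • Wstar W
          - ((u₁ * (t₃ - 1)) * u₂) • Dout W - ((u₂ * (t₄ - 1)) * u₁) • Din W).det := by
  classical
  set s₁ := u₁ * (t₃ - 1) with hs₁
  set s₂ := u₂ * (t₄ - 1) with hs₂
  set c := 1 - s₁ * s₂ with hc
  by_cases hc0 : c = 0
  · rw [hc0]
    rcases Nat.eq_zero_or_pos (Fintype.card V) with hV | hV
    · haveI hVe : IsEmpty V := Fintype.card_eq_zero_iff.mp hV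
      haveI hEe : IsEmpty (Edge W) := ⟨fun a => hVe.false a.1.1⟩
      have hE0 : Fintype.card (Edge W) = 0 := Fintype.card_eq_zero
      rw [hV, hE0, pow_zero, one_mul, one_mul, Matrix.det_isEmpty, Matrix.det_isEmpty]
    · rw [zero_pow hV.ne', zero_mul]
      rcases Nat.eq_zero_or_pos (Fintype.card (Edge W)) with hE | hE
      · haveI hEe : IsEmpty (Edge W) := Fintype.card_eq_zero_iff.mp hE
        have hW0 : W = 0 := by
          ext x y
          by_contra h
          exact hEe.false ⟨(x, y), h⟩
        have hWs : Wstar W = 0 := by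
          ext x y
          simp [Wstar, hW0]
        have hA : ∀ x y, Adj W x y = 0 := by
          intro x y; simp [Adj, hW0]
        have hDo : Dout W = 0 := by
          unfold Dout
          simp only [hA, Finset.sum_const_zero]
          exact Matrix.diagonal_zero
        have hDi : Din W = 0 := by
          unfold Din
          simp only [hA, Finset.sum_const_zero]
          exact Matrix.diagonal_zero
        haveI : Nonempty V := Fintype.card_pos_iff.mp hV
        have hmat : (0:ℂ) • (1 : Matrix V V ℂ) - u₁ • W - u₂ • Wstar W
            - (s₁ * u₂) • Dout W - (s₂ * u₁) • Din W = 0 := by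
          rw [hWs, hDo, hDi, hW0]
          simp
        rw [hE, pow_zero, one_mul, hmat, Matrix.det_zero]
      · rw [zero_pow hE.ne', zero_mul]
  · -- main case : c ≠ 0
    have hM := M_eq W t₃ t₄ u₁ u₂
    have hJJ := Jm_mul_Jm W s₁ s₂
    set J := Jm W s₁ s₂ with hJ
    set K := Kp W u₁ u₂ with hK
    set L := Lm W with hL
    set L2 := L * (1 + J) with hL2
    have key : ((1 : Matrix (BiEdge W) (BiEdge W) ℂ) - M W 1 1 t₃ t₄ u₁ u₂) * (1 + J)
        = c • 1 - K * L2 := by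
      rw [hM, hL2]
      have e1 : ((1 : Matrix (BiEdge W) (BiEdge W) ℂ) - (K * L + J)) * (1 + J)
          = 1 - J * J - K * L * (1 + J) := by noncomm_ring
      rw [e1, hJJ, Matrix.mul_assoc, hc, sub_smul, one_smul]
    have hdet := congrArg Matrix.det key
    rw [Matrix.det_mul, det_one_add_Jm, ← hc] at hdet
    have hL2K : L2 * K = u₁ • W + u₂ • Wstar W
        + ((s₁ * u₂) • Dout W + (s₂ * u₁) • Din W) := by
      rw [hL2, Matrix.mul_assoc, Matrix.add_mul, Matrix.one_mul, Matrix.mul_add,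
        LK_eq, LJK_eq]
    have hRW : (c • (1 : Matrix V V ℂ) - u₁ • W - u₂ • Wstar W
        - (s₁ * u₂) • Dout W - (s₂ * u₁) • Din W) = c • 1 - L2 * K := by
      rw [hL2K]
      abel
    rw [hRW]
    -- now prove c^n * det(1-M) = c^m * det(c•1 - L2*K)
    set n := Fintype.card V with hn
    set m := Fintype.card (Edge W) with hm
    have hcard : Fintype.card (BiEdge W) = m + m := by
      rw [Fintype.card_sum]
    have h2 : c • (1 : Matrix (BiEdge W) (BiEdge W) ℂ) - K * L2
        = c • (1 - K * (c⁻¹ • L2)) := by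
      rw [smul_sub]
      congr 1
      rw [Matrix.mul_smul, smul_smul, mul_inv_cancel₀ hc0, one_smul]
    have h3 : (c • (1 : Matrix (BiEdge W) (BiEdge W) ℂ) - K * L2).det
        = c ^ (m + m) * ((1 : Matrix (BiEdge W) (BiEdge W) ℂ) - K * (c⁻¹ • L2)).det := by
      rw [h2, Matrix.det_smul, hcard]
    have h4 : ((1 : Matrix (BiEdge W) (BiEdge W) ℂ) - K * (c⁻¹ • L2)).det
        = ((1 : Matrix V V ℂ) - c⁻¹ • (L2 * K)).det := by
      rw [Matrix.det_one_sub_mul_comm, Matrix.smul_mul]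
    have h5 : c ^ n * ((1 : Matrix V V ℂ) - c⁻¹ • (L2 * K)).det
        = (c • (1 : Matrix V V ℂ) - L2 * K).det := by
      have e2 : c • ((1 : Matrix V V ℂ) - c⁻¹ • (L2 * K)) = c • 1 - L2 * K := by
        rw [smul_sub, smul_smul, mul_inv_cancel₀ hc0, one_smul]
      rw [← e2, Matrix.det_smul, hn]
    apply mul_left_cancel₀ (pow_ne_zero m hc0)
    calc c ^ m * (c ^ n * ((1 : Matrix (BiEdge W) (BiEdge W) ℂ)
          - M W 1 1 t₃ t₄ u₁ u₂).det)
        = c ^ n * (((1 : Matrix (BiEdge W) (BiEdge W) ℂ)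
          - M W 1 1 t₃ t₄ u₁ u₂).det * c ^ m) := by ring
      _ = c ^ n * (c • (1 : Matrix (BiEdge W) (BiEdge W) ℂ) - K * L2).det := by rw [hdet]
      _ = c ^ n * (c ^ (m + m)
          * ((1 : Matrix (BiEdge W) (BiEdge W) ℂ) - K * (c⁻¹ • L2)).det) := by rw [h3]
      _ = c ^ m * (c ^ m * (c ^ n
          * ((1 : Matrix V V ℂ) - c⁻¹ • (L2 * K)).det)) := by rw [h4]; ring
      _ = c ^ m * (c ^ m * (c • (1 : Matrix V V ℂ) - L2 * K).det) := by rw [h5]
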